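/- Let t₀ > 0 and let f : (0, t₀] → (0, ∞) be nondecreasing with f(t) → 0 as t → 0⁺. Then there exists a function g : (0, t₀] → (0, ∞) that is concave on (0, t₀], nondecreasing, satisfies f(t) ≤ g(t) for all t ∈ (0, t₀], and satisfies g(t) → 0 as t → 0⁺. -/

import Mathlib

open Set Filter Topology

/-- Concave envelope lemma: if `f : (0,t₀] → (0,∞)` is nondecreasing with `f(t) → 0` as
`t → 0⁺`, then there is a `g : (0,t₀] → (0,∞)` concave on `(0,t₀]`, nondecreasing, with
`f ≤ g` on `(0,t₀]` and `g(t) → 0` as `t → 0⁺`. -/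
theorem stmt10 (t₀ : ℝ) (ht₀ : 0 < t₀) (f : ℝ → ℝ)
    (hfpos : ∀ t ∈ Ioc 0 t₀, 0 < f t)
    (hfmono : MonotoneOn f (Ioc 0 t₀))
    (hflim : Tendsto f (𝓝[>] 0) (𝓝 0)) :
    ∃ g : ℝ → ℝ,
      ConcaveOn ℝ (Ioc 0 t₀) g ∧
      MonotoneOn g (Ioc 0 t₀) ∧
      (∀ t ∈ Ioc 0 t₀, 0 < g t) ∧
      (∀ t ∈ Ioc 0 t₀, f t ≤ g t) ∧
      Tendsto g (𝓝[>] 0) (𝓝 0) := by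
  set S : Set (ℝ × ℝ) := {p | 0 ≤ p.1 ∧ ∀ s ∈ Ioc 0 t₀, f s ≤ p.1 * s + p.2} with hS
  have hmem0 : ((0 : ℝ), f t₀) ∈ S := by
    refine ⟨le_refl 0, fun s hs => ?_⟩
    simpa using hfmono hs (right_mem_Ioc.2 ht₀) hs.2
  haveI : Nonempty S := ⟨⟨_, hmem0⟩⟩
  set g : ℝ → ℝ := fun t => ⨅ p : S, (p : ℝ × ℝ).1 * t + (p : ℝ × ℝ).2 with hg
  have hbdd : ∀ t ∈ Ioc 0 t₀,
      BddBelow (Set.range fun p : S => (p : ℝ × ℝ).1 * t + (p : ℝ × ℝ).2) := by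
    intro t ht
    exact ⟨f t, by rintro _ ⟨p, rfl⟩; exact p.2.2 t ht⟩
  have hfg : ∀ t ∈ Ioc 0 t₀, f t ≤ g t :=
    fun t ht => le_ciInf fun p => p.2.2 t ht
  have hgle : ∀ t ∈ Ioc 0 t₀, ∀ p : S, g t ≤ (p : ℝ × ℝ).1 * t + (p : ℝ × ℝ).2 :=
    fun t ht p => ciInf_le (hbdd t ht) p
  have hgpos : ∀ t ∈ Ioc 0 t₀, 0 < g t :=
    fun t ht => (hfpos t ht).trans_le (hfg t ht)
  have hgmono : MonotoneOn g (Ioc 0 t₀) := by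
    intro x hx y hy hxy
    refine le_ciInf fun p => ?_
    calc g x ≤ (p : ℝ × ℝ).1 * x + (p : ℝ × ℝ).2 := hgle x hx p
      _ ≤ (p : ℝ × ℝ).1 * y + (p : ℝ × ℝ).2 :=
        add_le_add_left (mul_le_mul_of_nonneg_left hxy p.2.1) _
  have hgconc : ConcaveOn ℝ (Ioc 0 t₀) g := by
    refine ⟨convex_Ioc 0 t₀, fun x hx y hy a b ha hb hab => ?_⟩
    refine le_ciInf fun p => ?_
    have h1 : g x ≤ (p : ℝ × ℝ).1 * x + (p : ℝ × ℝ).2 := hgle x hx p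
    have h2 : g y ≤ (p : ℝ × ℝ).1 * y + (p : ℝ × ℝ).2 := hgle y hy p
    have key : (p : ℝ × ℝ).1 * (a * x + b * y) + (p : ℝ × ℝ).2
        = a * ((p : ℝ × ℝ).1 * x + (p : ℝ × ℝ).2)
          + b * ((p : ℝ × ℝ).1 * y + (p : ℝ × ℝ).2) := by
      linear_combination (p : ℝ × ℝ).2 * hab.symm
    simp only [smul_eq_mul]
    calc a * g x + b * g y
        ≤ a * ((p : ℝ × ℝ).1 * x + (p : ℝ × ℝ).2)
          + b * ((p : ℝ × ℝ).1 * y + (p : ℝ × ℝ).2) :=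
        add_le_add (mul_le_mul_of_nonneg_left h1 ha) (mul_le_mul_of_nonneg_left h2 hb)
      _ = (p : ℝ × ℝ).1 * (a * x + b * y) + (p : ℝ × ℝ).2 := key.symm
  refine ⟨g, hgconc, hgmono, hgpos, hfg, ?_⟩
  rw [Metric.tendsto_nhds]
  intro ε hε
  rw [Metric.tendsto_nhds] at hflim
  have h2 := hflim (ε / 2) (by positivity)
  rw [eventually_iff, mem_nhdsGT_iff_exists_Ioo_subset] at h2
  obtain ⟨u, hu, hsub⟩ := h2
  have hu0 : (0 : ℝ) < u := hu
  set δ : ℝ := min (u / 2) t₀ with hδ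
  have hδ0 : 0 < δ := lt_min (by linarith) ht₀
  have hδt₀ : δ ∈ Ioc 0 t₀ := ⟨hδ0, min_le_right _ _⟩
  have hδu : δ < u := (min_le_left _ _).trans_lt (by linarith)
  have hfδ : f δ < ε / 2 := by
    have := hsub ⟨hδ0, hδu⟩
    rw [mem_setOf_eq, Real.dist_eq, sub_zero, abs_of_pos (hfpos δ hδt₀)] at this
    exact this
  set a : ℝ := f t₀ / δ with ha
  have hft₀ : 0 < f t₀ := hfpos t₀ (right_mem_Ioc.2 ht₀)
  have ha0 : 0 < a := div_pos hft₀ hδ0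
  have hpmem : ((a, ε / 2) : ℝ × ℝ) ∈ S := by
    refine ⟨ha0.le, fun s hs => ?_⟩
    rcases le_or_gt s δ with h | h
    · have h1 : f s ≤ f δ := hfmono hs hδt₀ h
      have h2 : 0 ≤ a * s := mul_nonneg ha0.le hs.1.le
      linarith
    · have h1 : f s ≤ f t₀ := hfmono hs (right_mem_Ioc.2 ht₀) hs.2
      have h3 : a * δ = f t₀ := by rw [ha, div_mul_cancel₀ _ hδ0.ne']
      have h4 : a * δ ≤ a * s := mul_le_mul_of_nonneg_left h.le ha0.le
      linarith
  filter_upwards [Ioo_mem_nhdsGT_of_mem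
    (show (0 : ℝ) ∈ Ico 0 (min δ (ε / 2 / a)) from ⟨le_refl 0, lt_min hδ0 (by positivity)⟩)]
    with t ht
  have htIoc : t ∈ Ioc 0 t₀ := ⟨ht.1, ((ht.2.trans_le (min_le_left _ _)).le.trans hδt₀.2)⟩
  have h1 : g t ≤ a * t + ε / 2 := hgle t htIoc ⟨(a, ε / 2), hpmem⟩
  have h2 : t < ε / 2 / a := ht.2.trans_le (min_le_right _ _)
  have h3 : a * t < ε / 2 := by
    rw [lt_div_iff₀ ha0] at h2
    nlinarith
  rw [Real.dist_eq, sub_zero, abs_of_pos (hgpos t htIoc)]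
  linarith
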